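/- Let H be a real (separable) Hilbert space and let ξ_1,…,ξ_n be independent H-valued integrable random variables such that ‖ξ_i − E ξ_i‖ ≤ M̃ almost surely for every i, for some constant M̃ > 0. Then for every λ > 0, P( ‖(1/n)·Σ_{i=1}^n (ξ_i − E ξ_i)‖ ≥ λ ) ≤ 2·exp( −3·n·λ² / (8·M̃²) ). -/

import Mathlib

open MeasureTheory ProbabilityTheory
open scoped BigOperators

open Real

lemma aux_sinh_le (x : ℝ) (hx : 0 ≤ x) : Real.sinh x ≤ x * Real.cosh x := by
  have hmono : MonotoneOn (fun y : ℝ => y * Real.cosh y - Real.sinh y) (Set.Ici 0) := by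
    have hder : ∀ y : ℝ, HasDerivAt (fun y : ℝ => y * Real.cosh y - Real.sinh y)
        (y * Real.sinh y) y := by
      intro y
      have h := ((hasDerivAt_id y).mul (Real.hasDerivAt_cosh y)).sub (Real.hasDerivAt_sinh y)
      refine h.congr_deriv ?_
      simp only [id_eq]
      ring
    refine monotoneOn_of_deriv_nonneg (convex_Ici 0) ?_ ?_ ?_
    · exact (Continuous.sub (continuous_id.mul Real.continuous_cosh) Real.continuous_sinh).continuousOn
    · intro y _; exact (hder y).differentiableAt.differentiableWithinAt
    · intro y hy
      rw [interior_Ici] at hy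
      rw [(hder y).deriv]
      exact mul_nonneg hy.le (Real.sinh_nonneg_iff.2 hy.le)
  have h0 := hmono (Set.self_mem_Ici) hx hx
  simp only [zero_mul, Real.sinh_zero, sub_zero, zero_sub] at h0
  linarith

lemma aux_sinh_div_mono : MonotoneOn (fun z : ℝ => Real.sinh z / z) (Set.Ioi 0) := by
  have hder : ∀ z : ℝ, z ≠ 0 → HasDerivAt (fun z : ℝ => Real.sinh z / z)
      ((Real.cosh z * z - Real.sinh z * 1) / z ^ 2) z := by
    intro z hz
    exact (Real.hasDerivAt_sinh z).div (hasDerivAt_id z) hz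
  refine monotoneOn_of_deriv_nonneg (convex_Ioi 0) ?_ ?_ ?_
  · exact ContinuousOn.div Real.continuous_sinh.continuousOn continuousOn_id
      (fun z hz => ne_of_gt hz)
  · intro z hz
    rw [interior_Ioi] at hz
    exact (hder z (ne_of_gt hz)).differentiableAt.differentiableWithinAt
  · intro z hz
    rw [interior_Ioi] at hz
    rw [(hder z (ne_of_gt hz)).deriv]
    apply div_nonneg _ (sq_nonneg z)
    have := aux_sinh_le z hz.le
    linarith

lemma aux_gamma_hasDeriv (t : ℝ) {u : ℝ} (hu : 0 < u) :
    HasDerivAt (fun u : ℝ => Real.cosh (t * Real.sqrt u))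
      (Real.sinh (t * Real.sqrt u) * (t * (1 / (2 * Real.sqrt u)))) u := by
  have h1 : HasDerivAt (fun u : ℝ => t * Real.sqrt u) (t * (1 / (2 * Real.sqrt u))) u :=
    (Real.hasDerivAt_sqrt (ne_of_gt hu)).const_mul t
  exact (Real.hasDerivAt_cosh (t * Real.sqrt u)).comp u h1

lemma aux_gamma_convex (t : ℝ) (ht : 0 < t) :
    ConvexOn ℝ (Set.Ici 0) (fun u : ℝ => Real.cosh (t * Real.sqrt u)) := by
  have hderiv_eq : ∀ u ∈ Set.Ioi (0:ℝ),
      deriv (fun u : ℝ => Real.cosh (t * Real.sqrt u)) u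
        = (t ^ 2 / 2) * (Real.sinh (t * Real.sqrt u) / (t * Real.sqrt u)) := by
    intro u hu
    rw [(aux_gamma_hasDeriv t hu).deriv]
    have hsu : Real.sqrt u ≠ 0 := ne_of_gt (Real.sqrt_pos.2 hu)
    field_simp
  have hmono : MonotoneOn (deriv (fun u : ℝ => Real.cosh (t * Real.sqrt u))) (Set.Ioi 0) := by
    intro u₁ hu₁ u₂ hu₂ h12
    rw [hderiv_eq u₁ hu₁, hderiv_eq u₂ hu₂]
    have hz₁ : (0:ℝ) < t * Real.sqrt u₁ := mul_pos ht (Real.sqrt_pos.2 hu₁)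
    have hz₂ : (0:ℝ) < t * Real.sqrt u₂ := mul_pos ht (Real.sqrt_pos.2 hu₂)
    have hle : t * Real.sqrt u₁ ≤ t * Real.sqrt u₂ :=
      mul_le_mul_of_nonneg_left (Real.sqrt_le_sqrt h12) ht.le
    exact mul_le_mul_of_nonneg_left (aux_sinh_div_mono hz₁ hz₂ hle)
      (by positivity)
  have hcont : ContinuousOn (fun u : ℝ => Real.cosh (t * Real.sqrt u)) (Set.Ici 0) :=
    (Real.continuous_cosh.comp (continuous_const.mul Real.continuous_sqrt)).continuousOn
  have hdiff : DifferentiableOn ℝ (fun u : ℝ => Real.cosh (t * Real.sqrt u))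
      (interior (Set.Ici 0)) := by
    rw [interior_Ici]
    intro u hu
    exact (aux_gamma_hasDeriv t hu).differentiableAt.differentiableWithinAt
  have := MonotoneOn.convexOn_of_deriv (convex_Ici 0) hcont hdiff
  rw [interior_Ici] at this
  exact this hmono

open RealInnerProductSpace in
lemma aux_chord {H : Type*} [NormedAddCommGroup H] [InnerProductSpace ℝ H]
    (t b : ℝ) (ht : 0 < t) (hb : 0 < b) (v x : H) (hx : ‖x‖ ≤ b) :
    Real.cosh (t * ‖v + x‖) ≤ Real.cosh (t * ‖v‖) * Real.cosh (t * b)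
      + Real.sinh (t * ‖v‖) * Real.sinh (t * b) / (‖v‖ * b) * ⟪v, x⟫ := by
  by_cases hv : v = 0
  · subst hv
    simp only [inner_zero_left, mul_zero, add_zero, norm_zero, zero_add]
    rw [Real.cosh_zero, one_mul]
    refine Real.cosh_le_cosh.2 ?_
    rw [abs_of_nonneg (by positivity), abs_of_nonneg (by positivity)]
    exact mul_le_mul_of_nonneg_left hx ht.le
  · set A := ‖v‖ with hA
    have hA0 : 0 < A := norm_pos_iff.2 hv
    set s := (⟪v, x⟫ : ℝ) with hs
    have habs : |s| ≤ A * b :=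
      (abs_real_inner_le_norm v x).trans (mul_le_mul_of_nonneg_left hx (norm_nonneg v))
    have hsl : -(A*b) ≤ s := (abs_le.1 habs).1
    have hsu : s ≤ A*b := (abs_le.1 habs).2
    set γ := fun u : ℝ => Real.cosh (t * Real.sqrt u) with hγ
    have hnsq : ‖v + x‖ ^ 2 = A^2 + 2*s + ‖x‖^2 := norm_add_sq_real v x
    have h1 : Real.cosh (t * ‖v + x‖) = γ (‖v + x‖^2) := by
      rw [hγ]; simp only
      rw [Real.sqrt_sq (norm_nonneg _)]
    have hγmono : ∀ u₁ u₂ : ℝ, 0 ≤ u₁ → u₁ ≤ u₂ → γ u₁ ≤ γ u₂ := by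
      intro u₁ u₂ h0 h12
      refine Real.cosh_le_cosh.2 ?_
      rw [abs_of_nonneg (by positivity), abs_of_nonneg (by positivity)]
      exact mul_le_mul_of_nonneg_left (Real.sqrt_le_sqrt h12) ht.le
    have hw : ‖v + x‖^2 ≤ A^2 + 2*s + b^2 := by
      rw [hnsq]
      have : ‖x‖^2 ≤ b^2 := by nlinarith [norm_nonneg x]
      linarith
    have h2 : γ (‖v + x‖^2) ≤ γ (A^2 + 2*s + b^2) := hγmono _ _ (sq_nonneg _) hw
    -- convexity step
    set θ := (s + A*b) / (2*A*b) with hθ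
    have hAb : (0:ℝ) < 2*A*b := by positivity
    have hθ0 : 0 ≤ θ := div_nonneg (by linarith) hAb.le
    have hθ1 : 0 ≤ 1 - θ := by
      rw [hθ]
      rw [sub_nonneg, div_le_one hAb]
      linarith
    have hθsum : (1 - θ) + θ = 1 := by ring
    have hcomb : (1-θ) * (A-b)^2 + θ * (A+b)^2 = A^2 + 2*s + b^2 := by
      rw [hθ]; field_simp; ring
    have hconv := (aux_gamma_convex t ht).2 (Set.mem_Ici.2 (sq_nonneg (A-b)))
      (Set.mem_Ici.2 (sq_nonneg (A+b))) hθ1 hθ0 hθsum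
    simp only [smul_eq_mul] at hconv
    rw [hcomb] at hconv
    have hγm : Real.cosh (t * Real.sqrt ((A-b)^2)) = Real.cosh (t*(A-b)) := by
      rw [Real.sqrt_sq_eq_abs, ← Real.cosh_abs (t*(A-b)), abs_mul, abs_of_nonneg ht.le]
    have hγp : Real.cosh (t * Real.sqrt ((A+b)^2)) = Real.cosh (t*(A+b)) := by
      rw [Real.sqrt_sq_eq_abs, abs_of_nonneg (by positivity)]
    rw [hγm, hγp] at hconv
    have hexp : (1-θ) * Real.cosh (t*(A-b)) + θ * Real.cosh (t*(A+b))
        = Real.cosh (t*A) * Real.cosh (t*b)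
          + Real.sinh (t*A) * Real.sinh (t*b) / (A * b) * s := by
      have e1 : t*(A-b) = t*A - t*b := by ring
      have e2 : t*(A+b) = t*A + t*b := by ring
      rw [e1, e2, Real.cosh_sub, Real.cosh_add, hθ]
      field_simp
      ring
    calc Real.cosh (t * ‖v + x‖) = γ (‖v + x‖^2) := h1
      _ ≤ γ (A^2 + 2*s + b^2) := h2
      _ ≤ (1-θ) * Real.cosh (t*(A-b)) + θ * Real.cosh (t*(A+b)) := hconv
      _ = _ := hexp

open MeasureTheory in
open RealInnerProductSpace in
lemma aux_one_step {Ω : Type*} [MeasurableSpace Ω] (P : Measure Ω) [IsProbabilityMeasure P]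
    {H : Type*} [NormedAddCommGroup H] [InnerProductSpace ℝ H] [CompleteSpace H]
    [MeasurableSpace H] [BorelSpace H] [SecondCountableTopology H]
    (t b : ℝ) (ht : 0 < t) (hb : 0 < b) (Z : Ω → H) (hZm : Measurable Z)
    (hZ0 : ∫ ω, Z ω ∂P = 0) (hZb : ∀ᵐ ω ∂P, ‖Z ω‖ ≤ b) (v : H) :
    ∫⁻ ω, ENNReal.ofReal (Real.cosh (t * ‖v + Z ω‖)) ∂P
      ≤ ENNReal.ofReal (Real.cosh (t * ‖v‖) * Real.cosh (t * b)) := by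
  have hZint : Integrable Z P :=
    Integrable.mono' (integrable_const b) hZm.aestronglyMeasurable hZb
  set f := fun ω => Real.cosh (t * ‖v + Z ω‖) with hf
  have hfm : Measurable f :=
    Real.continuous_cosh.measurable.comp ((measurable_const.add hZm).norm.const_mul t)
  have hfb : ∀ᵐ ω ∂P, ‖f ω‖ ≤ Real.cosh (t * (‖v‖ + b)) := by
    filter_upwards [hZb] with ω hω
    rw [Real.norm_eq_abs, abs_of_pos (Real.cosh_pos _)]
    refine Real.cosh_le_cosh.2 ?_
    rw [abs_of_nonneg (by positivity), abs_of_nonneg (by positivity)]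
    refine mul_le_mul_of_nonneg_left ?_ ht.le
    calc ‖v + Z ω‖ ≤ ‖v‖ + ‖Z ω‖ := norm_add_le _ _
      _ ≤ ‖v‖ + b := by linarith
  have hfint : Integrable f P :=
    Integrable.mono' (integrable_const _) hfm.aestronglyMeasurable hfb
  set K := Real.sinh (t * ‖v‖) * Real.sinh (t * b) / (‖v‖ * b) with hK
  have hinner_m : Measurable (fun ω => (⟪v, Z ω⟫ : ℝ)) :=
    (continuous_const.inner continuous_id).measurable.comp hZm
  have hinner_int : Integrable (fun ω => (⟪v, Z ω⟫ : ℝ)) P := by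
    refine Integrable.mono' (integrable_const (‖v‖ * b)) hinner_m.aestronglyMeasurable ?_
    filter_upwards [hZb] with ω hω
    rw [Real.norm_eq_abs]
    exact (abs_real_inner_le_norm v (Z ω)).trans
      (mul_le_mul_of_nonneg_left hω (norm_nonneg v))
  set h := fun ω => Real.cosh (t * ‖v‖) * Real.cosh (t * b) + K * (⟪v, Z ω⟫ : ℝ) with hh
  have hhint : Integrable h P := (integrable_const _).add (hinner_int.const_mul K)
  have hle : ∫ ω, f ω ∂P ≤ ∫ ω, h ω ∂P := by
    refine integral_mono_ae hfint hhint ?_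
    filter_upwards [hZb] with ω hω
    exact aux_chord t b ht hb v (Z ω) hω
  have hval : ∫ ω, h ω ∂P = Real.cosh (t * ‖v‖) * Real.cosh (t * b) := by
    rw [hh, integral_add (integrable_const _) (hinner_int.const_mul K),
      integral_const, integral_const_mul, integral_inner hZint v, hZ0, inner_zero_right,
      mul_zero, add_zero]
    simp
  rw [← ofReal_integral_eq_lintegral_ofReal hfint
    (Filter.Eventually.of_forall fun ω => (Real.cosh_pos _).le)]
  exact ENNReal.ofReal_le_ofReal (hval ▸ hle)

open MeasureTheory ProbabilityTheory in
lemma aux_sum_bound {Ω : Type*} [MeasurableSpace Ω] (P : Measure Ω) [IsProbabilityMeasure P]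
    {H : Type*} [NormedAddCommGroup H] [InnerProductSpace ℝ H] [CompleteSpace H]
    [MeasurableSpace H] [BorelSpace H] [SecondCountableTopology H]
    {n : ℕ} (X : Fin n → Ω → H) (hXm : ∀ i, Measurable (X i))
    (hX : iIndepFun X P)
    (hX0 : ∀ i, ∫ ω, X i ω ∂P = 0) (b t : ℝ) (ht : 0 < t) (hb : 0 < b)
    (hXb : ∀ i, ∀ᵐ ω ∂P, ‖X i ω‖ ≤ b) (s : Finset (Fin n)) :
    ∫⁻ ω, ENNReal.ofReal (Real.cosh (t * ‖∑ i ∈ s, X i ω‖)) ∂P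
      ≤ ENNReal.ofReal (Real.cosh (t * b)) ^ s.card := by
  classical
  set g : H → ENNReal := fun h => ENNReal.ofReal (Real.cosh (t * ‖h‖)) with hg
  have hgm : Measurable g :=
    (Real.continuous_cosh.measurable.comp (measurable_norm.const_mul t)).ennreal_ofReal
  induction s using Finset.induction_on with
  | empty => simp [hg]
  | insert _ _ hj =>
    rename_i j s IH
    set Y : Ω → H := fun ω => ∑ i ∈ s, X i ω with hY
    have hYm : Measurable Y := Finset.measurable_sum s fun i _ => hXm i
    have hYZ : IndepFun Y (X j) P := by
      have h := hX.indepFun_finsetSum_of_notMem hXm hj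
      have : (∑ i ∈ s, X i) = Y := by
        funext ω; simp [hY, Finset.sum_apply]
      rwa [this] at h
    haveI : IsProbabilityMeasure (P.map Y) := Measure.isProbabilityMeasure_map hYm.aemeasurable
    haveI : IsProbabilityMeasure (P.map (X j)) :=
      Measure.isProbabilityMeasure_map (hXm j).aemeasurable
    have hmap : P.map (fun ω => (Y ω, X j ω)) = (P.map Y).prod (P.map (X j)) :=
      (indepFun_iff_map_prod_eq_prod_map_map hYm.aemeasurable
        (hXm j).aemeasurable).1 hYZ
    have hgm2 : Measurable (fun p : H × H => g (p.1 + p.2)) :=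
      hgm.comp (measurable_fst.add measurable_snd)
    have e0 : ∫⁻ ω, g (∑ i ∈ insert j s, X i ω) ∂P = ∫⁻ ω, g (Y ω + X j ω) ∂P := by
      congr 1
      funext ω
      rw [Finset.sum_insert hj, add_comm]
    have e1 : ∫⁻ ω, g (Y ω + X j ω) ∂P
        = ∫⁻ y, ∫⁻ z, g (y + z) ∂(P.map (X j)) ∂(P.map Y) := by
      rw [← lintegral_map hgm2 (hYm.prodMk (hXm j)), hmap, lintegral_prod _ hgm2.aemeasurable]
    have e2 : ∀ y : H, ∫⁻ z, g (y + z) ∂(P.map (X j))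
        ≤ ENNReal.ofReal (Real.cosh (t * ‖y‖)) * ENNReal.ofReal (Real.cosh (t * b)) := by
      intro y
      have := aux_one_step P t b ht hb (X j) (hXm j) (hX0 j) (hXb j) y
      rw [lintegral_map (f := fun z => g (y + z)) (hgm.comp (measurable_const.add measurable_id)) (hXm j)]
      refine le_trans ?_ (le_trans this ?_)
      · exact le_of_eq rfl
      · rw [ENNReal.ofReal_mul (Real.cosh_pos _).le]
    calc ∫⁻ ω, g (∑ i ∈ insert j s, X i ω) ∂P
        = ∫⁻ y, ∫⁻ z, g (y + z) ∂(P.map (X j)) ∂(P.map Y) := by rw [e0, e1]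
      _ ≤ ∫⁻ y, ENNReal.ofReal (Real.cosh (t * ‖y‖)) * ENNReal.ofReal (Real.cosh (t * b))
            ∂(P.map Y) := lintegral_mono e2
      _ = (∫⁻ y, g y ∂(P.map Y)) * ENNReal.ofReal (Real.cosh (t * b)) :=
            lintegral_mul_const _ hgm
      _ = (∫⁻ ω, g (Y ω) ∂P) * ENNReal.ofReal (Real.cosh (t * b)) := by
            rw [lintegral_map hgm hYm]
      _ ≤ ENNReal.ofReal (Real.cosh (t * b)) ^ s.card * ENNReal.ofReal (Real.cosh (t * b)) :=
            mul_le_mul_left IH _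
      _ = ENNReal.ofReal (Real.cosh (t * b)) ^ (insert j s).card := by
            rw [Finset.card_insert_of_notMem hj, pow_succ]

/-- **Concentration for bounded Hilbert-space-valued variables (from Pinelis'
inequality).** If `ξ_1, …, ξ_n` are independent integrable `H`-valued random
variables with `‖ξ_i − E ξ_i‖ ≤ M̃` almost surely, then for every `λ > 0`,
`P(‖(1/n)·∑ (ξ_i − E ξ_i)‖ ≥ λ) ≤ 2·exp(−3·n·λ²/(8·M̃²))`. -/
theorem pinelis_bounded_concentration
    {Ω : Type*} [MeasurableSpace Ω] (P : Measure Ω) [IsProbabilityMeasure P]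
    {H : Type*} [NormedAddCommGroup H] [InnerProductSpace ℝ H] [CompleteSpace H]
    [MeasurableSpace H] [BorelSpace H] [SecondCountableTopology H]
    (n : ℕ) (hn : 1 ≤ n) (ξ : Fin n → Ω → H)
    (hmeas : ∀ i, Measurable (ξ i))
    (hindep : iIndepFun ξ P)
    (hint : ∀ i, Integrable (ξ i) P)
    (Mt : ℝ) (hMt : 0 < Mt)
    (hbdd : ∀ i, ∀ᵐ ω ∂P, ‖ξ i ω - ∫ ω', ξ i ω' ∂P‖ ≤ Mt) :
    ∀ lam : ℝ, 0 < lam →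
      P {ω | lam ≤ ‖(1 / (n : ℝ)) • ∑ i, (ξ i ω - ∫ ω', ξ i ω' ∂P)‖} ≤
        ENNReal.ofReal (2 * Real.exp (-3 * n * lam ^ 2 / (8 * Mt ^ 2))) := by
  intro lam hlam
  classical
  set X : Fin n → Ω → H := fun i ω => ξ i ω - ∫ ω', ξ i ω' ∂P with hXdef
  have hXm : ∀ i, Measurable (X i) := fun i => (hmeas i).sub measurable_const
  have hXindep : iIndepFun X P :=
    hindep.comp (fun i => fun y : H => y - ∫ ω', ξ i ω' ∂P)
      (fun i => measurable_id.sub measurable_const)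
  have hX0 : ∀ i, ∫ ω, X i ω ∂P = 0 := by
    intro i
    rw [hXdef]
    simp only
    rw [integral_sub (hint i) (integrable_const _), integral_const]
    simp
  have hXb : ∀ i, ∀ᵐ ω ∂P, ‖X i ω‖ ≤ Mt := hbdd
  set t := lam / Mt ^ 2 with hT
  have ht : 0 < t := div_pos hlam (by positivity)
  set S : Ω → H := fun ω => ∑ i, X i ω with hS
  have hSm : Measurable S := Finset.measurable_sum _ fun i _ => hXm i
  have hnpos : (0:ℝ) < n := by
    have : (1:ℝ) ≤ n := by exact_mod_cast hn
    linarith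
  have hbound := aux_sum_bound P X hXm hXindep hX0 Mt t ht hMt hXb Finset.univ
  rw [Finset.card_univ, Fintype.card_fin] at hbound
  set fL : Ω → ENNReal := fun ω => ENNReal.ofReal (Real.cosh (t * ‖S ω‖)) with hfL
  have hfLm : Measurable fL :=
    (Real.continuous_cosh.measurable.comp (hSm.norm.const_mul t)).ennreal_ofReal
  set ε := ENNReal.ofReal (Real.cosh (t * ((n:ℝ) * lam))) with hε
  have hεpos : 0 < Real.cosh (t * ((n:ℝ) * lam)) := Real.cosh_pos _
  have hsub : {ω | lam ≤ ‖(1 / (n : ℝ)) • ∑ i, (ξ i ω - ∫ ω', ξ i ω' ∂P)‖}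
      ⊆ {ω | ε ≤ fL ω} := by
    intro ω hω
    simp only [Set.mem_setOf_eq] at hω ⊢
    have h1 : ‖(1 / (n:ℝ)) • S ω‖ = (1/(n:ℝ)) * ‖S ω‖ := by
      rw [norm_smul, Real.norm_eq_abs, abs_of_pos (by positivity)]
    have hω' : lam ≤ (1/(n:ℝ)) * ‖S ω‖ := by
      rw [← h1]; exact hω
    have h2 : (n:ℝ) * lam ≤ ‖S ω‖ := by
      have := mul_le_mul_of_nonneg_left hω' hnpos.le
      calc (n:ℝ) * lam ≤ (n:ℝ) * ((1/(n:ℝ)) * ‖S ω‖) := this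
        _ = ‖S ω‖ := by field_simp
    apply ENNReal.ofReal_le_ofReal
    refine Real.cosh_le_cosh.2 ?_
    rw [abs_of_nonneg (by positivity), abs_of_nonneg (by positivity)]
    exact mul_le_mul_of_nonneg_left h2 ht.le
  have hmarkov : ε * P {ω | ε ≤ fL ω} ≤ ∫⁻ ω, fL ω ∂P :=
    mul_meas_ge_le_lintegral₀ hfLm.aemeasurable ε
  have hP1 : P {ω | lam ≤ ‖(1 / (n : ℝ)) • ∑ i, (ξ i ω - ∫ ω', ξ i ω' ∂P)‖}
      ≤ ENNReal.ofReal (Real.cosh (t * Mt)) ^ n / ε := by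
    rw [ENNReal.le_div_iff_mul_le (Or.inl (ENNReal.ofReal_pos.2 hεpos).ne')
      (Or.inl ENNReal.ofReal_ne_top)]
    calc P {ω | lam ≤ ‖(1 / (n : ℝ)) • ∑ i, (ξ i ω - ∫ ω', ξ i ω' ∂P)‖} * ε
        = ε * P {ω | lam ≤ ‖(1 / (n : ℝ)) • ∑ i, (ξ i ω - ∫ ω', ξ i ω' ∂P)‖} := mul_comm _ _
      _ ≤ ε * P {ω | ε ≤ fL ω} := mul_le_mul_right (measure_mono hsub) ε
      _ ≤ ∫⁻ ω, fL ω ∂P := hmarkov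
      _ ≤ ENNReal.ofReal (Real.cosh (t * Mt)) ^ n := hbound
  refine hP1.trans ?_
  rw [← ENNReal.ofReal_pow (Real.cosh_pos _).le, hε, ← ENNReal.ofReal_div_of_pos hεpos]
  apply ENNReal.ofReal_le_ofReal
  -- the purely real estimate
  have h1 : Real.cosh (t * Mt) ^ n ≤ Real.exp ((n:ℝ) * ((t*Mt)^2/2)) := by
    calc Real.cosh (t * Mt) ^ n ≤ Real.exp ((t*Mt)^2/2) ^ n :=
          pow_le_pow_left₀ (Real.cosh_pos _).le (Real.cosh_le_exp_half_sq _) n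
      _ = Real.exp ((n:ℝ) * ((t*Mt)^2/2)) := by rw [← Real.exp_nat_mul]
  have h2 : Real.exp (t * ((n:ℝ) * lam)) / 2 ≤ Real.cosh (t * ((n:ℝ) * lam)) := by
    rw [Real.cosh_eq]
    have := (Real.exp_pos (-(t * ((n:ℝ) * lam)))).le
    linarith
  have h3 : Real.cosh (t * Mt) ^ n / Real.cosh (t * ((n:ℝ)*lam))
      ≤ Real.exp ((n:ℝ) * ((t*Mt)^2/2)) / (Real.exp (t * ((n:ℝ) * lam)) / 2) :=
    div_le_div₀ (Real.exp_pos _).le h1 (by positivity) h2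
  refine h3.trans ?_
  have h4 : Real.exp ((n:ℝ) * ((t*Mt)^2/2)) / (Real.exp (t * ((n:ℝ) * lam)) / 2)
      = 2 * Real.exp ((n:ℝ) * ((t*Mt)^2/2) - t * ((n:ℝ) * lam)) := by
    rw [Real.exp_sub]
    field_simp
  rw [h4]
  have h5 : (n:ℝ) * ((t*Mt)^2/2) - t * ((n:ℝ) * lam) ≤ -3 * n * lam ^ 2 / (8 * Mt ^ 2) := by
    have hc : 0 ≤ (n:ℝ) * lam^2 / Mt^2 := by positivity
    have e1 : (n:ℝ) * ((t*Mt)^2/2) - t * ((n:ℝ) * lam)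
        = -(1/2) * ((n:ℝ) * lam^2 / Mt^2) := by
      rw [hT]; field_simp; ring
    have e2 : -3 * (n:ℝ) * lam ^ 2 / (8 * Mt ^ 2) = -(3/8) * ((n:ℝ) * lam^2 / Mt^2) := by
      ring
    rw [e1, e2]
    linarith
  exact mul_le_mul_of_nonneg_left (Real.exp_le_exp.2 h5) (by norm_num)
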